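/- arXiv:2409.17949 — 2 statements merged into one kernel-verified Lean document; each statement's English description precedes it below -/
import Mathlib

section
/- In dimension 4, any tensor C_{abcd} with the algebraic symmetries of a Weyl tensor (antisymmetric in its first and second index pairs, symmetric under pair exchange, satisfying the first Bianchi identity, and totally trace-free) satisfies the dimensionally dependent identity C_{abmp} C^{dbmp} = (1/4) δ_a^d C_{cbmp} C^{cbmp}, where indices are raised with a nondegenerate symmetric bilinear form g. -/
open Finset

private theorem wrot3 (f : Fin 4 → Fin 4 → Fin 4 → ℝ) :
    ∑ a, ∑ b, ∑ c, f a b c = ∑ b, ∑ c, ∑ a, f a b c := by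
  rw [Finset.sum_comm]
  exact Finset.sum_congr rfl fun b _ => Finset.sum_comm

private theorem wrot4 (f : Fin 4 → Fin 4 → Fin 4 → Fin 4 → ℝ) :
    ∑ a, ∑ b, ∑ c, ∑ d, f a b c d = ∑ b, ∑ c, ∑ d, ∑ a, f a b c d := by
  rw [Finset.sum_comm]
  exact Finset.sum_congr rfl fun b _ => by
    rw [Finset.sum_comm]
    exact Finset.sum_congr rfl fun c _ => Finset.sum_comm

/-- `C` with the last two indices raised by `u`. -/
private def wcm (u : Fin 4 → Fin 4 → ℝ) (C : Fin 4 → Fin 4 → Fin 4 → Fin 4 → ℝ)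
    (a b c d : Fin 4) : ℝ :=
  ∑ c', ∑ d', u c c' * u d d' * C a b c' d'

section traces
variable (u : Fin 4 → Fin 4 → ℝ) (C : Fin 4 → Fin 4 → Fin 4 → Fin 4 → ℝ)

private theorem wtr23 (hanti1 : ∀ a b c d, C a b c d = - C b a c d)
    (htr : ∀ b d, ∑ a, ∑ c, u a c * C a b c d = 0) (a d : Fin 4) :
    ∑ b, ∑ c, u b c * C a b c d = 0 := by
  have h : ∀ b c, u b c * C a b c d = -(u b c * C b a c d) := fun b c => by
    rw [hanti1 a b]; ring
  simp only [h, Finset.sum_neg_distrib, htr a d, neg_zero]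

private theorem wtr24 (hanti1 : ∀ a b c d, C a b c d = - C b a c d)
    (hanti2 : ∀ a b c d, C a b c d = - C a b d c)
    (htr : ∀ b d, ∑ a, ∑ c, u a c * C a b c d = 0) (a c : Fin 4) :
    ∑ b, ∑ d, u b d * C a b c d = 0 := by
  have h : ∀ b d, u b d * C a b c d = u b d * C b a d c := fun b d => by
    rw [hanti1 a b, hanti2 b a]; ring
  simp only [h]
  exact htr a c

private theorem wtr14 (hanti2 : ∀ a b c d, C a b c d = - C a b d c)
    (htr : ∀ b d, ∑ a, ∑ c, u a c * C a b c d = 0) (b c : Fin 4) :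
    ∑ a, ∑ d, u a d * C a b c d = 0 := by
  have h : ∀ a d, u a d * C a b c d = -(u a d * C a b d c) := fun a d => by
    rw [hanti2 a b c d]; ring
  simp only [h, Finset.sum_neg_distrib, htr b c, neg_zero]

-- trace lemmas for wcm
private theorem wcmP1 (htr : ∀ b d, ∑ a, ∑ c, u a c * C a b c d = 0) (i h : Fin 4) :
    ∑ g, wcm u C g i g h = 0 := by
  simp only [wcm]
  rw [wrot3, wrot3]
  apply Finset.sum_eq_zero
  intro d' _
  have hx : ∀ g c', u g c' * u h d' * C g i c' d' = u h d' * (u g c' * C g i c' d') :=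
    fun g c' => by ring
  simp only [hx, ← Finset.mul_sum]
  rw [htr i d', mul_zero]

end traces

section traces2
variable (u : Fin 4 → Fin 4 → ℝ) (C : Fin 4 → Fin 4 → Fin 4 → Fin 4 → ℝ)

private theorem wcmP2 (hanti1 : ∀ a b c d, C a b c d = - C b a c d)
    (hanti2 : ∀ a b c d, C a b c d = - C a b d c)
    (htr : ∀ b d, ∑ a, ∑ c, u a c * C a b c d = 0) (g z : Fin 4) :
    ∑ h, wcm u C g h z h = 0 := by
  simp only [wcm]
  rw [wrot3]
  apply Finset.sum_eq_zero
  intro c' _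
  have hx : ∀ d' h, u z c' * u h d' * C g h c' d' = u z c' * (u h d' * C g h c' d') :=
    fun d' h => by ring
  simp only [hx, ← Finset.mul_sum]
  rw [Finset.sum_comm, wtr24 u C hanti1 hanti2 htr g c', mul_zero]

private theorem wcmP3 (hanti2 : ∀ a b c d, C a b c d = - C a b d c)
    (htr : ∀ b d, ∑ a, ∑ c, u a c * C a b c d = 0) (j g : Fin 4) :
    ∑ h, wcm u C h j g h = 0 := by
  simp only [wcm]
  rw [wrot3]
  apply Finset.sum_eq_zero
  intro c' _
  have hx : ∀ d' h, u g c' * u h d' * C h j c' d' = u g c' * (u h d' * C h j c' d') :=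
    fun d' h => by ring
  simp only [hx, ← Finset.mul_sum]
  rw [Finset.sum_comm, wtr14 u C hanti2 htr j c', mul_zero]

private theorem wcmP4 (hanti1 : ∀ a b c d, C a b c d = - C b a c d)
    (htr : ∀ b d, ∑ a, ∑ c, u a c * C a b c d = 0) (g j : Fin 4) :
    ∑ i, wcm u C g i i j = 0 := by
  simp only [wcm]
  rw [wrot3, wrot3]
  apply Finset.sum_eq_zero
  intro d' _
  have hx : ∀ i c', u i c' * u j d' * C g i c' d' = u j d' * (u i c' * C g i c' d') :=
    fun i c' => by ring
  simp only [hx, ← Finset.mul_sum]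
  rw [wtr23 u C hanti1 htr g d', mul_zero]

private theorem wcmA (hanti1 : ∀ a b c d, C a b c d = - C b a c d) (a b c d : Fin 4) :
    wcm u C a b c d = - wcm u C b a c d := by
  simp only [wcm, ← Finset.sum_neg_distrib]
  exact Finset.sum_congr rfl fun c' _ => Finset.sum_congr rfl fun d' _ => by
    rw [hanti1 a b]; ring

private theorem wcmB (hanti2 : ∀ a b c d, C a b c d = - C a b d c) (a b c d : Fin 4) :
    wcm u C a b c d = - wcm u C a b d c := by
  simp only [wcm, ← Finset.sum_neg_distrib]
  rw [Finset.sum_comm]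
  exact Finset.sum_congr rfl fun c' _ => Finset.sum_congr rfl fun d' _ => by
    rw [hanti2 a b]; ring

end traces2

section reds
variable (u : Fin 4 → Fin 4 → ℝ) (C : Fin 4 → Fin 4 → Fin 4 → Fin 4 → ℝ)

private theorem wred1
    (usym : ∀ a b, u a b = u b a)
    (hpair : ∀ a b c d, C a b c d = C c d a b) (f d : Fin 4) :
    ∑ h, ∑ i, ∑ j, wcm u C f h i j * wcm u C i j d h
    = ∑ b, ∑ m, ∑ p, C f b m p *
        (∑ d', ∑ b', ∑ m', ∑ p',
          u d d' * u b b' * u m m' * u p p' * C d' b' m' p') := by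
  simp only [wcm]
  simp only [Finset.sum_mul, Finset.mul_sum]
  simp only [← Fintype.sum_prod_type']
  refine Fintype.sum_equiv
    ⟨fun x => (x.1, x.2.2.2.2.2.1, x.2.2.2.2.2.2, x.2.2.2.1, x.2.2.2.2.1, x.2.1, x.2.2.1),
     fun x => (x.1, x.2.2.2.2.2.1, x.2.2.2.2.2.2, x.2.2.2.1, x.2.2.2.2.1, x.2.1, x.2.2.1),
     fun x => rfl, fun y => rfl⟩ _ _ ?_
  rintro ⟨h, i, j, d1, h1, i1, j1⟩
  dsimp only [Equiv.coe_fn_mk]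
  rw [hpair i j d1 h1, usym i i1, usym j j1]
  ring

private theorem wred2
    (usym : ∀ a b, u a b = u b a)
    (hpair : ∀ a b c d, C a b c d = C c d a b) (f d : Fin 4) :
    ∑ g, ∑ h, ∑ j, wcm u C f j g h * wcm u C g h d j
    = ∑ b, ∑ m, ∑ p, C f b m p *
        (∑ d', ∑ b', ∑ m', ∑ p',
          u d d' * u b b' * u m m' * u p p' * C d' b' m' p') := by
  simp only [wcm]
  simp only [Finset.sum_mul, Finset.mul_sum]
  simp only [← Fintype.sum_prod_type']
  refine Fintype.sum_equiv
    ⟨fun x => (x.2.2.1, x.2.2.2.2.2.1, x.2.2.2.2.2.2, x.2.2.2.1, x.2.2.2.2.1, x.1, x.2.1),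
     fun y => (y.2.2.2.2.2.1, y.2.2.2.2.2.2, y.1, y.2.2.2.1, y.2.2.2.2.1, y.2.1, y.2.2.1),
     fun x => rfl, fun y => rfl⟩ _ _ ?_
  rintro ⟨g, h, j, d1, j1, g1, h1⟩
  dsimp only [Equiv.coe_fn_mk]
  rw [hpair g h d1 j1, usym g g1, usym h h1]
  ring

private theorem wred3
    (usym : ∀ a b, u a b = u b a)
    (hpair : ∀ a b c d, C a b c d = C c d a b) :
    ∑ g, ∑ h, ∑ i, ∑ j, wcm u C g h i j * wcm u C i j g h
    = ∑ c, ∑ b, ∑ m, ∑ p, C c b m p *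
        (∑ c', ∑ b', ∑ m', ∑ p',
          u c c' * u b b' * u m m' * u p p' * C c' b' m' p') := by
  simp only [wcm]
  simp only [Finset.sum_mul, Finset.mul_sum]
  simp only [← Fintype.sum_prod_type']
  refine Fintype.sum_equiv
    ⟨fun x => (x.1, x.2.1, x.2.2.2.2.2.2.1, x.2.2.2.2.2.2.2, x.2.2.2.2.1, x.2.2.2.2.2.1, x.2.2.1, x.2.2.2.1),
     fun x => (x.1, x.2.1, x.2.2.2.2.2.2.1, x.2.2.2.2.2.2.2, x.2.2.2.2.1, x.2.2.2.2.2.1, x.2.2.1, x.2.2.2.1),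
     fun x => rfl, fun y => rfl⟩ _ _ ?_
  rintro ⟨g, h, i, j, g1, h1, i1, j1⟩
  dsimp only [Equiv.coe_fn_mk]
  rw [hpair i j g1 h1, usym i i1, usym j j1]
  ring

end reds

section comb
variable (A : Fin 4 → Fin 4 → Fin 4 → Fin 4 → ℝ)

private def wGG (x1 x2 x3 x4 p1 p2 p3 p4 : Fin 4) : ℝ :=
  A x1 x2 p1 p2 * A x3 x4 p3 p4 + A x1 x2 p3 p4 * A x3 x4 p1 p2

private def wAA (x1 x2 x3 x4 p1 p2 p3 p4 : Fin 4) : ℝ :=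
  wGG A x1 x2 x3 x4 p1 p2 p3 p4 - wGG A x1 x3 x2 x4 p1 p2 p3 p4
    + wGG A x1 x4 x2 x3 p1 p2 p3 p4

private theorem wsw12 (hA : ∀ a b c d, A a b c d = - A b a c d) (x1 x2 x3 x4 p1 p2 p3 p4 : Fin 4) :
    wAA A x2 x1 x3 x4 p1 p2 p3 p4 = - wAA A x1 x2 x3 x4 p1 p2 p3 p4 := by
  simp only [wAA, wGG]
  rw [hA x2 x1 p1 p2, hA x2 x1 p3 p4]
  ring

private theorem wsw23 (hA : ∀ a b c d, A a b c d = - A b a c d) (x1 x2 x3 x4 p1 p2 p3 p4 : Fin 4) :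
    wAA A x1 x3 x2 x4 p1 p2 p3 p4 = - wAA A x1 x2 x3 x4 p1 p2 p3 p4 := by
  simp only [wAA, wGG]
  rw [hA x3 x2 p1 p2, hA x3 x2 p3 p4]
  ring

private theorem wsw34 (hA : ∀ a b c d, A a b c d = - A b a c d) (x1 x2 x3 x4 p1 p2 p3 p4 : Fin 4) :
    wAA A x1 x2 x4 x3 p1 p2 p3 p4 = - wAA A x1 x2 x3 x4 p1 p2 p3 p4 := by
  simp only [wAA, wGG]
  rw [hA x4 x3 p1 p2, hA x4 x3 p3 p4]
  ring

private theorem weq12 (hA : ∀ a b c d, A a b c d = - A b a c d) (x y z p1 p2 p3 p4 : Fin 4) :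
    wAA A x x y z p1 p2 p3 p4 = 0 := by
  have h := wsw12 A hA x x y z p1 p2 p3 p4; linarith
private theorem weq23 (hA : ∀ a b c d, A a b c d = - A b a c d) (x y z p1 p2 p3 p4 : Fin 4) :
    wAA A x y y z p1 p2 p3 p4 = 0 := by
  have h := wsw23 A hA x y y z p1 p2 p3 p4; linarith
private theorem weq34 (hA : ∀ a b c d, A a b c d = - A b a c d) (x y z p1 p2 p3 p4 : Fin 4) :
    wAA A x y z z p1 p2 p3 p4 = 0 := by
  have h := wsw34 A hA x y z z p1 p2 p3 p4; linarith
private theorem weq13 (hA : ∀ a b c d, A a b c d = - A b a c d) (x y z p1 p2 p3 p4 : Fin 4) :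
    wAA A x y x z p1 p2 p3 p4 = 0 := by
  have h := wsw23 A hA x x y z p1 p2 p3 p4
  rw [weq12 A hA] at h; linarith
private theorem weq14 (hA : ∀ a b c d, A a b c d = - A b a c d) (x y z p1 p2 p3 p4 : Fin 4) :
    wAA A x y z x p1 p2 p3 p4 = 0 := by
  have h := wsw34 A hA x y x z p1 p2 p3 p4
  rw [weq13 A hA] at h; linarith
private theorem weq24 (hA : ∀ a b c d, A a b c d = - A b a c d) (x y z p1 p2 p3 p4 : Fin 4) :
    wAA A x y z y p1 p2 p3 p4 = 0 := by
  have h := wsw34 A hA x y y z p1 p2 p3 p4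
  rw [weq23 A hA] at h; linarith

end comb

private theorem wphi (A : Fin 4 → Fin 4 → Fin 4 → Fin 4 → ℝ)
    (hA : ∀ a b c d, A a b c d = - A b a c d)
    (z x0 x1 x2 x3 x4 p1 p2 p3 p4 : Fin 4) :
    (if x0 = z then (1:ℝ) else 0) * wAA A x1 x2 x3 x4 p1 p2 p3 p4
    - (if x1 = z then (1:ℝ) else 0) * wAA A x0 x2 x3 x4 p1 p2 p3 p4
    + (if x2 = z then (1:ℝ) else 0) * wAA A x0 x1 x3 x4 p1 p2 p3 p4
    - (if x3 = z then (1:ℝ) else 0) * wAA A x0 x1 x2 x4 p1 p2 p3 p4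
    + (if x4 = z then (1:ℝ) else 0) * wAA A x0 x1 x2 x3 p1 p2 p3 p4 = 0 := by
  have hcase : x0 = x1 ∨ x0 = x2 ∨ x0 = x3 ∨ x0 = x4 ∨ x1 = x2 ∨ x1 = x3 ∨ x1 = x4
      ∨ x2 = x3 ∨ x2 = x4 ∨ x3 = x4 := by
    revert x0 x1 x2 x3 x4; decide
  rcases hcase with h|h|h|h|h|h|h|h|h|h <;> subst h
  · -- x1 := x0
    simp only [weq12 A hA]
    ring
  · -- x2 := x0
    simp only [weq12 A hA, weq13 A hA]
    linear_combination (if x0 = z then (1:ℝ) else 0) * wsw12 A hA x0 x1 x3 x4 p1 p2 p3 p4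
  · -- x3 := x0
    simp only [weq13 A hA, weq14 A hA]
    linear_combination (if x0 = z then (1:ℝ) else 0) *
        (wsw23 A hA x1 x0 x2 x4 p1 p2 p3 p4 - wsw12 A hA x0 x1 x2 x4 p1 p2 p3 p4)
  · -- x4 := x0
    simp only [weq14 A hA, weq24 A hA]
    linear_combination (if x0 = z then (1:ℝ) else 0) *
        (wsw34 A hA x1 x2 x0 x3 p1 p2 p3 p4 - wsw23 A hA x1 x0 x2 x3 p1 p2 p3 p4
          + wsw12 A hA x0 x1 x2 x3 p1 p2 p3 p4)
  · -- x2 := x1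
    simp only [weq12 A hA, weq23 A hA]
    ring
  · -- x3 := x1
    simp only [weq13 A hA, weq23 A hA, weq24 A hA]
    linear_combination -(if x1 = z then (1:ℝ) else 0) * wsw23 A hA x0 x1 x2 x4 p1 p2 p3 p4
  · -- x4 := x1
    simp only [weq14 A hA, weq24 A hA]
    linear_combination -((if x1 = z then (1:ℝ) else 0) * wsw34 A hA x0 x2 x1 x3 p1 p2 p3 p4)
      + (if x1 = z then (1:ℝ) else 0) * wsw23 A hA x0 x1 x2 x3 p1 p2 p3 p4
  · -- x3 := x2
    simp only [weq23 A hA, weq34 A hA]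
    ring
  · -- x4 := x2
    simp only [weq24 A hA, weq34 A hA]
    linear_combination (if x2 = z then (1:ℝ) else 0) * wsw34 A hA x0 x1 x2 x3 p1 p2 p3 p4
  · -- x4 := x3
    simp only [weq34 A hA]
    ring

/-- **Dimensionally dependent identity for Weyl-type tensors in dimension 4.**
Let `g` be a nondegenerate symmetric bilinear form on a 4-dimensional space
(components `g a b`, inverse `ginv`).  Any (0,4)-tensor `C` with the algebraic
symmetries of a Weyl tensor (antisymmetry in both index pairs, symmetry under
pair exchange, first Bianchi identity, total trace-freeness) satisfies
`C_{abmp} C^{dbmp} = (1/4) δ_a^d C_{cbmp} C^{cbmp}`,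
where indices are raised with `ginv`. -/
theorem weyl_dim4_identity
    (g ginv : Fin 4 → Fin 4 → ℝ)
    (hgsym : ∀ a b, g a b = g b a)
    (hinv : ∀ a b, ∑ c, ginv a c * g c b = if a = b then (1 : ℝ) else 0)
    (C : Fin 4 → Fin 4 → Fin 4 → Fin 4 → ℝ)
    (hanti1 : ∀ a b c d, C a b c d = - C b a c d)
    (hanti2 : ∀ a b c d, C a b c d = - C a b d c)
    (hpair : ∀ a b c d, C a b c d = C c d a b)
    (hbianchi : ∀ a b c d, C a b c d + C a c d b + C a d b c = 0)
    (htracefree : ∀ b d, ∑ a, ∑ c, ginv a c * C a b c d = 0)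
    (a d : Fin 4) :
    (∑ b, ∑ m, ∑ p, C a b m p *
      (∑ d', ∑ b', ∑ m', ∑ p',
        ginv d d' * ginv b b' * ginv m m' * ginv p p' * C d' b' m' p'))
    = (1/4) * (if a = d then (1 : ℝ) else 0) *
      (∑ c, ∑ b, ∑ m, ∑ p, C c b m p *
        (∑ c', ∑ b', ∑ m', ∑ p',
          ginv c c' * ginv b b' * ginv m m' * ginv p p' * C c' b' m' p')) := by
  -- symmetry of the inverse metric
  have usym : ∀ x y, ginv x y = ginv y x := by
    set A : Matrix (Fin 4) (Fin 4) ℝ := Matrix.of ginv with hAdef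
    set B : Matrix (Fin 4) (Fin 4) ℝ := Matrix.of g with hBdef
    have hAB : A * B = 1 := by
      ext i j
      rw [Matrix.mul_apply]
      simpa [A, B, Matrix.one_apply] using hinv i j
    have hBA : B * A = 1 := mul_eq_one_comm.mp hAB
    have hBsym : B.transpose = B := by
      ext i j; simp [B, Matrix.transpose_apply, hgsym i j]
    have hAt : A.transpose * B = 1 := by
      have h2 : (B * A).transpose = 1 := by rw [hBA]; simp
      rw [Matrix.transpose_mul, hBsym] at h2
      exact h2
    have hAA : A.transpose = A := by
      calc A.transpose = A.transpose * (B * A) := by rw [hBA, Matrix.mul_one]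
      _ = (A.transpose * B) * A := by rw [Matrix.mul_assoc]
      _ = A := by rw [hAt, Matrix.one_mul]
    intro x y
    have := congrFun (congrFun hAA y) x
    simpa [A, Matrix.transpose_apply] using this
  have hA : ∀ w x y z, wcm ginv C w x y z = - wcm ginv C x w y z :=
    wcmA ginv C hanti1
  -- the master identity: sum of the pointwise 5-term alternating identity
  have master : ∑ g', ∑ h, ∑ i, ∑ j,
      ((if a = d then (1:ℝ) else 0) * wAA (wcm ginv C) g' h i j g' h i j
      - (if g' = d then (1:ℝ) else 0) * wAA (wcm ginv C) a h i j g' h i j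
      + (if h = d then (1:ℝ) else 0) * wAA (wcm ginv C) a g' i j g' h i j
      - (if i = d then (1:ℝ) else 0) * wAA (wcm ginv C) a g' h j g' h i j
      + (if j = d then (1:ℝ) else 0) * wAA (wcm ginv C) a g' h i g' h i j) = 0 := by
    apply Finset.sum_eq_zero; intro g' _
    apply Finset.sum_eq_zero; intro h _
    apply Finset.sum_eq_zero; intro i _
    apply Finset.sum_eq_zero; intro j _
    exact wphi (wcm ginv C) hA d a g' h i j g' h i j
  simp only [Finset.sum_add_distrib, Finset.sum_sub_distrib] at master

  -- abbreviations for readability in comments: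
  -- M := LHS of the goal, K := the big scalar sum in the RHS
  -- T0 : the δ(a,d) * K piece
  have hK : (∑ g', ∑ h, ∑ i, ∑ j, wAA (wcm ginv C) g' h i j g' h i j)
      = ∑ c, ∑ b, ∑ m, ∑ p, C c b m p *
        (∑ c', ∑ b', ∑ m', ∑ p',
          ginv c c' * ginv b b' * ginv m m' * ginv p p' * C c' b' m' p') := by
    simp only [wAA, wGG]
    simp only [Finset.sum_add_distrib, Finset.sum_sub_distrib]
    have ht1 : (∑ g', ∑ h, ∑ i, ∑ j, wcm ginv C g' h g' h * wcm ginv C i j i j) = 0 := by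
      rw [wrot4]
      apply Finset.sum_eq_zero; intro h _
      apply Finset.sum_eq_zero; intro i _
      apply Finset.sum_eq_zero; intro j _
      rw [← Finset.sum_mul, wcmP1 ginv C htracefree h h, zero_mul]
    have ht2 : (∑ g', ∑ h, ∑ i, ∑ j, wcm ginv C g' h i j * wcm ginv C i j g' h)
        = ∑ c, ∑ b, ∑ m, ∑ p, C c b m p *
          (∑ c', ∑ b', ∑ m', ∑ p',
            ginv c c' * ginv b b' * ginv m m' * ginv p p' * C c' b' m' p') :=
      wred3 ginv C usym hpair
    have ht3 : (∑ g', ∑ h, ∑ i, ∑ j, wcm ginv C g' i g' h * wcm ginv C h j i j) = 0 := by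
      rw [wrot4]
      apply Finset.sum_eq_zero; intro h _
      apply Finset.sum_eq_zero; intro i _
      apply Finset.sum_eq_zero; intro j _
      rw [← Finset.sum_mul, wcmP1 ginv C htracefree i h, zero_mul]
    have ht4 : (∑ g', ∑ h, ∑ i, ∑ j, wcm ginv C g' i i j * wcm ginv C h j g' h) = 0 := by
      rw [wrot4, wrot4, wrot4]
      apply Finset.sum_eq_zero; intro j _
      apply Finset.sum_eq_zero; intro g' _
      apply Finset.sum_eq_zero; intro h _
      rw [← Finset.sum_mul, wcmP4 ginv C hanti1 htracefree g' j, zero_mul]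
    have ht5 : (∑ g', ∑ h, ∑ i, ∑ j, wcm ginv C g' j g' h * wcm ginv C h i i j) = 0 := by
      rw [wrot4]
      apply Finset.sum_eq_zero; intro h _
      apply Finset.sum_eq_zero; intro i _
      apply Finset.sum_eq_zero; intro j _
      rw [← Finset.sum_mul, wcmP1 ginv C htracefree j h, zero_mul]
    have ht6 : (∑ g', ∑ h, ∑ i, ∑ j, wcm ginv C g' j i j * wcm ginv C h i g' h) = 0 := by
      apply Finset.sum_eq_zero; intro g' _
      apply Finset.sum_eq_zero; intro h _
      apply Finset.sum_eq_zero; intro i _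
      rw [← Finset.sum_mul, wcmP2 ginv C hanti1 hanti2 htracefree g' i, zero_mul]
    rw [ht1, ht2, ht3, ht4, ht5, ht6]
    ring
  have hT0 : (∑ g', ∑ h, ∑ i, ∑ j,
        (if a = d then (1:ℝ) else 0) * wAA (wcm ginv C) g' h i j g' h i j)
      = (if a = d then (1:ℝ) else 0) *
        (∑ c, ∑ b, ∑ m, ∑ p, C c b m p *
          (∑ c', ∑ b', ∑ m', ∑ p',
            ginv c c' * ginv b b' * ginv m m' * ginv p p' * C c' b' m' p')) := by
    simp only [← Finset.mul_sum]
    rw [hK]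
  -- T1 = M
  have hT1 : (∑ g', ∑ h, ∑ i, ∑ j,
        (if g' = d then (1:ℝ) else 0) * wAA (wcm ginv C) a h i j g' h i j)
      = ∑ b, ∑ m, ∑ p, C a b m p *
        (∑ d', ∑ b', ∑ m', ∑ p',
          ginv d d' * ginv b b' * ginv m m' * ginv p p' * C d' b' m' p') := by
    simp only [← Finset.mul_sum]
    simp only [ite_mul, one_mul, zero_mul]
    rw [Finset.sum_ite_eq' Finset.univ d, if_pos (Finset.mem_univ d)]
    simp only [wAA, wGG]
    simp only [Finset.sum_add_distrib, Finset.sum_sub_distrib]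
    have u1 : (∑ h, ∑ i, ∑ j, wcm ginv C a h d h * wcm ginv C i j i j) = 0 := by
      rw [wrot3]
      apply Finset.sum_eq_zero; intro i _
      apply Finset.sum_eq_zero; intro j _
      rw [← Finset.sum_mul, wcmP2 ginv C hanti1 hanti2 htracefree a d, zero_mul]
    have u2 : (∑ h, ∑ i, ∑ j, wcm ginv C a h i j * wcm ginv C i j d h)
        = ∑ b, ∑ m, ∑ p, C a b m p *
          (∑ d', ∑ b', ∑ m', ∑ p',
            ginv d d' * ginv b b' * ginv m m' * ginv p p' * C d' b' m' p') :=
      wred1 ginv C usym hpair a d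
    have u3 : (∑ h, ∑ i, ∑ j, wcm ginv C a i d h * wcm ginv C h j i j) = 0 := by
      apply Finset.sum_eq_zero; intro h _
      apply Finset.sum_eq_zero; intro i _
      rw [← Finset.mul_sum, wcmP2 ginv C hanti1 hanti2 htracefree h i, mul_zero]
    have u4 : (∑ h, ∑ i, ∑ j, wcm ginv C a i i j * wcm ginv C h j d h) = 0 := by
      rw [wrot3, wrot3]
      apply Finset.sum_eq_zero; intro j _
      apply Finset.sum_eq_zero; intro h _
      rw [← Finset.sum_mul, wcmP4 ginv C hanti1 htracefree a j, zero_mul]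
    have u5 : (∑ h, ∑ i, ∑ j, wcm ginv C a j d h * wcm ginv C h i i j) = 0 := by
      rw [wrot3, wrot3]
      apply Finset.sum_eq_zero; intro j _
      apply Finset.sum_eq_zero; intro h _
      rw [← Finset.mul_sum, wcmP4 ginv C hanti1 htracefree h j, mul_zero]
    have u6 : (∑ h, ∑ i, ∑ j, wcm ginv C a j i j * wcm ginv C h i d h) = 0 := by
      apply Finset.sum_eq_zero; intro h _
      apply Finset.sum_eq_zero; intro i _
      rw [← Finset.sum_mul, wcmP2 ginv C hanti1 hanti2 htracefree a i, zero_mul]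
    rw [u1, u2, u3, u4, u5, u6]
    ring
  -- T2 = -M
  have hT2 : (∑ g', ∑ h, ∑ i, ∑ j,
        (if h = d then (1:ℝ) else 0) * wAA (wcm ginv C) a g' i j g' h i j)
      = -(∑ b, ∑ m, ∑ p, C a b m p *
        (∑ d', ∑ b', ∑ m', ∑ p',
          ginv d d' * ginv b b' * ginv m m' * ginv p p' * C d' b' m' p')) := by
    rw [wrot4]
    simp only [← Finset.mul_sum]
    simp only [ite_mul, one_mul, zero_mul]
    rw [Finset.sum_ite_eq' Finset.univ d, if_pos (Finset.mem_univ d)]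
    rw [wrot3, wrot3]
    simp only [wAA, wGG]
    simp only [Finset.sum_add_distrib, Finset.sum_sub_distrib]
    have v1 : (∑ g', ∑ i, ∑ j, wcm ginv C a g' g' d * wcm ginv C i j i j) = 0 := by
      rw [wrot3]
      apply Finset.sum_eq_zero; intro i _
      apply Finset.sum_eq_zero; intro j _
      rw [← Finset.sum_mul, wcmP4 ginv C hanti1 htracefree a d, zero_mul]
    have v2 : (∑ g', ∑ i, ∑ j, wcm ginv C a g' i j * wcm ginv C i j g' d)
        = -(∑ b, ∑ m, ∑ p, C a b m p *
          (∑ d', ∑ b', ∑ m', ∑ p',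
            ginv d d' * ginv b b' * ginv m m' * ginv p p' * C d' b' m' p')) := by
      have hpt : ∀ g' i j, wcm ginv C a g' i j * wcm ginv C i j g' d
          = -(wcm ginv C a g' i j * wcm ginv C i j d g') := fun g' i j => by
        rw [wcmB ginv C hanti2 i j g' d]; ring
      simp only [hpt, Finset.sum_neg_distrib]
      rw [wred1 ginv C usym hpair a d]
    have v3 : (∑ g', ∑ i, ∑ j, wcm ginv C a i g' d * wcm ginv C g' j i j) = 0 := by
      apply Finset.sum_eq_zero; intro g' _
      apply Finset.sum_eq_zero; intro i _
      rw [← Finset.mul_sum, wcmP2 ginv C hanti1 hanti2 htracefree g' i, mul_zero]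
    have v4 : (∑ g', ∑ i, ∑ j, wcm ginv C a i i j * wcm ginv C g' j g' d) = 0 := by
      rw [wrot3]
      apply Finset.sum_eq_zero; intro i _
      apply Finset.sum_eq_zero; intro j _
      rw [← Finset.mul_sum, wcmP1 ginv C htracefree j d, mul_zero]
    have v5 : (∑ g', ∑ i, ∑ j, wcm ginv C a j g' d * wcm ginv C g' i i j) = 0 := by
      rw [wrot3, wrot3]
      apply Finset.sum_eq_zero; intro j _
      apply Finset.sum_eq_zero; intro g' _
      rw [← Finset.mul_sum, wcmP4 ginv C hanti1 htracefree g' j, mul_zero]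
    have v6 : (∑ g', ∑ i, ∑ j, wcm ginv C a j i j * wcm ginv C g' i g' d) = 0 := by
      apply Finset.sum_eq_zero; intro g' _
      apply Finset.sum_eq_zero; intro i _
      rw [← Finset.sum_mul, wcmP2 ginv C hanti1 hanti2 htracefree a i, zero_mul]
    rw [v1, v2, v3, v4, v5, v6]
    ring
  -- T3 = M
  have hT3 : (∑ g', ∑ h, ∑ i, ∑ j,
        (if i = d then (1:ℝ) else 0) * wAA (wcm ginv C) a g' h j g' h i j)
      = ∑ b, ∑ m, ∑ p, C a b m p *
        (∑ d', ∑ b', ∑ m', ∑ p',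
          ginv d d' * ginv b b' * ginv m m' * ginv p p' * C d' b' m' p') := by
    rw [wrot4, wrot4]
    simp only [← Finset.mul_sum]
    simp only [ite_mul, one_mul, zero_mul]
    rw [Finset.sum_ite_eq' Finset.univ d, if_pos (Finset.mem_univ d)]
    rw [wrot3]
    simp only [wAA, wGG]
    simp only [Finset.sum_add_distrib, Finset.sum_sub_distrib]
    have w1 : (∑ g', ∑ h, ∑ j, wcm ginv C a g' g' h * wcm ginv C h j d j) = 0 := by
      rw [wrot3]
      apply Finset.sum_eq_zero; intro h _
      apply Finset.sum_eq_zero; intro j _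
      rw [← Finset.sum_mul, wcmP4 ginv C hanti1 htracefree a h, zero_mul]
    have w2 : (∑ g', ∑ h, ∑ j, wcm ginv C a g' d j * wcm ginv C h j g' h) = 0 := by
      rw [wrot3, wrot3]
      apply Finset.sum_eq_zero; intro j _
      apply Finset.sum_eq_zero; intro g' _
      rw [← Finset.mul_sum, wcmP3 ginv C hanti2 htracefree j g', mul_zero]
    have w3 : (∑ g', ∑ h, ∑ j, wcm ginv C a h g' h * wcm ginv C g' j d j) = 0 := by
      rw [wrot3, wrot3]
      apply Finset.sum_eq_zero; intro j _
      apply Finset.sum_eq_zero; intro g' _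
      rw [← Finset.sum_mul, wcmP2 ginv C hanti1 hanti2 htracefree a g', zero_mul]
    have w4 : (∑ g', ∑ h, ∑ j, wcm ginv C a h d j * wcm ginv C g' j g' h) = 0 := by
      rw [wrot3]
      apply Finset.sum_eq_zero; intro h _
      apply Finset.sum_eq_zero; intro j _
      rw [← Finset.mul_sum, wcmP1 ginv C htracefree j h, mul_zero]
    have w5 : (∑ g', ∑ h, ∑ j, wcm ginv C a j g' h * wcm ginv C g' h d j)
        = ∑ b, ∑ m, ∑ p, C a b m p *
          (∑ d', ∑ b', ∑ m', ∑ p',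
            ginv d d' * ginv b b' * ginv m m' * ginv p p' * C d' b' m' p') :=
      wred2 ginv C usym hpair a d
    have w6 : (∑ g', ∑ h, ∑ j, wcm ginv C a j d j * wcm ginv C g' h g' h) = 0 := by
      rw [wrot3]
      apply Finset.sum_eq_zero; intro h _
      apply Finset.sum_eq_zero; intro j _
      rw [← Finset.mul_sum, wcmP1 ginv C htracefree h h, mul_zero]
    rw [w1, w2, w3, w4, w5, w6]
    ring
  -- T4 = -M
  have hT4 : (∑ g', ∑ h, ∑ i, ∑ j,
        (if j = d then (1:ℝ) else 0) * wAA (wcm ginv C) a g' h i g' h i j)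
      = -(∑ b, ∑ m, ∑ p, C a b m p *
        (∑ d', ∑ b', ∑ m', ∑ p',
          ginv d d' * ginv b b' * ginv m m' * ginv p p' * C d' b' m' p')) := by
    rw [wrot4, wrot4, wrot4]
    simp only [← Finset.mul_sum]
    simp only [ite_mul, one_mul, zero_mul]
    rw [Finset.sum_ite_eq' Finset.univ d, if_pos (Finset.mem_univ d)]
    simp only [wAA, wGG]
    simp only [Finset.sum_add_distrib, Finset.sum_sub_distrib]
    have y1 : (∑ g', ∑ h, ∑ i, wcm ginv C a g' g' h * wcm ginv C h i i d) = 0 := by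
      rw [wrot3]
      apply Finset.sum_eq_zero; intro h _
      apply Finset.sum_eq_zero; intro i _
      rw [← Finset.sum_mul, wcmP4 ginv C hanti1 htracefree a h, zero_mul]
    have y2 : (∑ g', ∑ h, ∑ i, wcm ginv C a g' i d * wcm ginv C h i g' h) = 0 := by
      rw [wrot3, wrot3]
      apply Finset.sum_eq_zero; intro i _
      apply Finset.sum_eq_zero; intro g' _
      rw [← Finset.mul_sum, wcmP3 ginv C hanti2 htracefree i g', mul_zero]
    have y3 : (∑ g', ∑ h, ∑ i, wcm ginv C a h g' h * wcm ginv C g' i i d) = 0 := by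
      rw [wrot3, wrot3]
      apply Finset.sum_eq_zero; intro i _
      apply Finset.sum_eq_zero; intro g' _
      rw [← Finset.sum_mul, wcmP2 ginv C hanti1 hanti2 htracefree a g', zero_mul]
    have y4 : (∑ g', ∑ h, ∑ i, wcm ginv C a h i d * wcm ginv C g' i g' h) = 0 := by
      rw [wrot3]
      apply Finset.sum_eq_zero; intro h _
      apply Finset.sum_eq_zero; intro i _
      rw [← Finset.mul_sum, wcmP1 ginv C htracefree i h, mul_zero]
    have y5 : (∑ g', ∑ h, ∑ i, wcm ginv C a i g' h * wcm ginv C g' h i d)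
        = -(∑ b, ∑ m, ∑ p, C a b m p *
          (∑ d', ∑ b', ∑ m', ∑ p',
            ginv d d' * ginv b b' * ginv m m' * ginv p p' * C d' b' m' p')) := by
      have hpt : ∀ g' h i, wcm ginv C a i g' h * wcm ginv C g' h i d
          = -(wcm ginv C a i g' h * wcm ginv C g' h d i) := fun g' h i => by
        rw [wcmB ginv C hanti2 g' h i d]; ring
      simp only [hpt, Finset.sum_neg_distrib]
      rw [wred2 ginv C usym hpair a d]
    have y6 : (∑ g', ∑ h, ∑ i, wcm ginv C a i i d * wcm ginv C g' h g' h) = 0 := by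
      rw [wrot3]
      apply Finset.sum_eq_zero; intro h _
      apply Finset.sum_eq_zero; intro i _
      rw [← Finset.mul_sum, wcmP1 ginv C htracefree h h, mul_zero]
    rw [y1, y2, y3, y4, y5, y6]
    ring
  rw [hT0, hT1, hT2, hT3, hT4] at master
  linear_combination (-1/4 : ℝ) * master
end

section
/- Let K_{a₁…a_p} be a covariant tensor field with K̃ = Θ^s K under the conformal change g = Θ² g̃, and assume C·C ≠ 0 everywhere. Then the operator D^{s,(0,p)}_b K_{a₁…a_p} = ∇_b K_{a₁…a_p} + Σ_{j=1}^p M^{c}{}_{b a_j}(Λ, g, p, s) K_{a₁…c…a_p}, where M^c{}_{ba}(Λ,g,p,s) = ((s+p)/p) Λ_b δ_a^c + Λ_a δ_b^c − g_{ab} g^{cd} Λ_d, satisfies D̃^{s,(0,p)}_b K̃_{a₁…a_p} = Θ^s D^{s,(0,p)}_b K_{a₁…a_p}. -/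
open Finset

noncomputable section

/-- Kronecker delta. -/
def kd (a b : Fin 4) : ℝ := if a = b then 1 else 0

/-- The tensor `M^c{}_{ba}(Λ, g, p, s) = ((s+p)/p) Λ_b δ_a^c + Λ_a δ_b^c − g_{ab} g^{cd} Λ_d`. -/
def Mtensor {M : Type*} (g ginv : M → Fin 4 → Fin 4 → ℝ) (Λ : M → Fin 4 → ℝ)
    (p : ℕ) (s : ℤ) (x : M) (c b a : Fin 4) : ℝ :=
  (((s : ℝ) + p) / p) * Λ x b * kd a c + Λ x a * kd b c
    - g x a b * ∑ d, ginv x c d * Λ x d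

/-- Covariant derivative `∇_b K_{a₁…a_p}` of a rank-`p` covariant tensor w.r.t.
Christoffel-type symbols `Γ` (with `pd` the differential on scalars). -/
def covdP {M : Type*} {p : ℕ} (pd : (M → ℝ) → M → Fin 4 → ℝ)
    (Γ : M → Fin 4 → Fin 4 → Fin 4 → ℝ) (K : M → (Fin p → Fin 4) → ℝ)
    (x : M) (b : Fin 4) (as : Fin p → Fin 4) : ℝ :=
  pd (fun y => K y as) x b
    - ∑ j : Fin p, ∑ e, Γ x e b (as j) * K x (Function.update as j e)

/-- The conformal pseudo-differential
`D^{s,(0,p)}_b K_{a₁…a_p} = ∇_b K_{a₁…a_p} + Σ_j M^c{}_{b a_j}(Λ,g,p,s) K_{a₁…c…a_p}`. -/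
def Dop {M : Type*} {p : ℕ} (pd : (M → ℝ) → M → Fin 4 → ℝ)
    (Γ : M → Fin 4 → Fin 4 → Fin 4 → ℝ) (g ginv : M → Fin 4 → Fin 4 → ℝ)
    (Λ : M → Fin 4 → ℝ) (s : ℤ) (K : M → (Fin p → Fin 4) → ℝ)
    (x : M) (b : Fin 4) (as : Fin p → Fin 4) : ℝ :=
  covdP pd Γ K x b as
    + ∑ j : Fin p, ∑ c, Mtensor g ginv Λ p s x c b (as j) * K x (Function.update as j c)

/-- **Conformal covariance of the conformal pseudo-differential on covariant tensors.**
Setting: `g = Θ² g̃` (with `g̃^{ab} = Θ² g^{ab}` understood as `gtinv = Θ² ginv`),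
Levi-Civita Christoffel symbols `Γ`, `Γt` of `g`, `g̃` related by the transition-tensor
formula `Γ^c{}_{ba} − Γ̃^c{}_{ba} = 2δ_{(b}^cΥ_{a)} − g_{ab}Υ^c`, concomitants `Λ`, `Λ̃`
with `Υ = Λ − Λ̃`.  If `K̃ = Θ^s K` is a conformally covariant covariant tensor of rank
`p ≥ 1` and weight `s`, then `D̃^{s,(0,p)}_b K̃_{a₁…a_p} = Θ^s D^{s,(0,p)}_b K_{a₁…a_p}`. -/
theorem Dsp_conformally_covariant {M : Type*} {p : ℕ} (hp : 0 < p)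
    (pd : (M → ℝ) → M → Fin 4 → ℝ)
    (hmul : ∀ (f g : M → ℝ) (x : M) (a : Fin 4),
      pd (fun y => f y * g y) x a = f x * pd g x a + g x * pd f x a)
    (Θ : M → ℝ) (hΘ : ∀ x, 0 < Θ x)
    (hpow : ∀ (k : ℤ) (x : M) (a : Fin 4),
      pd (fun y => Θ y ^ k) x a = (k : ℝ) * Θ x ^ (k - 1) * pd Θ x a)
    (g ginv gt gtinv : M → Fin 4 → Fin 4 → ℝ)
    (hconf : ∀ x a b, g x a b = Θ x ^ 2 * gt x a b)
    (hconfinv : ∀ x a b, gtinv x a b = Θ x ^ 2 * ginv x a b)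
    (Γ Γt : M → Fin 4 → Fin 4 → Fin 4 → ℝ)
    (Λ Λt Υ : M → Fin 4 → ℝ)
    (hΥ : ∀ x a, Υ x a = pd Θ x a / Θ x)
    (htrans : ∀ x c b a, Γ x c b a - Γt x c b a =
      kd b c * Υ x a + kd a c * Υ x b - g x a b * ∑ d, ginv x c d * Υ x d)
    (hkey : ∀ x a, Υ x a = Λ x a - Λt x a)
    (s : ℤ) (K Kt : M → (Fin p → Fin 4) → ℝ)
    (hK : ∀ x as, Kt x as = Θ x ^ s * K x as)
    (x : M) (b : Fin 4) (as : Fin p → Fin 4) :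
    Dop pd Γt gt gtinv Λt s Kt x b as = Θ x ^ s * Dop pd Γ g ginv Λ s K x b as := by
  have hΘ0 : ∀ y, Θ y ≠ 0 := fun y => (hΘ y).ne'
  have hp0 : (p : ℝ) ≠ 0 := Nat.cast_ne_zero.mpr hp.ne'
  have hpdΘ : pd Θ x b = Θ x * Υ x b := by
    rw [hΥ]; field_simp
    rw [mul_comm, mul_div_cancel_left₀ _ (hΘ0 x)]
  have hΓt : ∀ c a, Γt x c b a = Γ x c b a -
      (kd b c * Υ x a + kd a c * Υ x b - g x a b * ∑ d, ginv x c d * Υ x d) := by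
    intro c a; have := htrans x c b a; linarith
  have hΛt : ∀ a, Λt x a = Λ x a - Υ x a := by
    intro a; have := hkey x a; linarith
  have hgg : ∀ (f : Fin 4 → ℝ) (a b c : Fin 4),
      gt x a b * ∑ d, gtinv x c d * f d = g x a b * ∑ d, ginv x c d * f d := by
    intro f a b c
    have hne : Θ x ^ 2 ≠ 0 := pow_ne_zero 2 (hΘ0 x)
    have h1 : gt x a b = g x a b / Θ x ^ 2 := by
      rw [hconf, mul_comm, mul_div_assoc, div_self hne, mul_one]
    have h2 : ∀ d, gtinv x c d * f d = Θ x ^ 2 * (ginv x c d * f d) := by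
      intro d; rw [hconfinv]; ring
    rw [h1]
    simp only [h2, ← Finset.mul_sum]
    calc g x a b / Θ x ^ 2 * (Θ x ^ 2 * ∑ d, ginv x c d * f d)
        = g x a b * (∑ d, ginv x c d * f d) * (Θ x ^ 2 / Θ x ^ 2) := by ring
      _ = g x a b * ∑ d, ginv x c d * f d := by rw [div_self hne, mul_one]
  have hkds : ∀ (f : Fin 4 → ℝ) (a : Fin 4), (∑ c, kd a c * f c) = f a := by
    intro f a
    simp [kd, ite_mul, Finset.sum_ite_eq]
  -- per-index key identity
  have hper : ∀ j : Fin p,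
      ((∑ c, Mtensor gt gtinv Λt p s x c b (as j) * Kt x (Function.update as j c))
        - ∑ e, Γt x e b (as j) * Kt x (Function.update as j e))
        - Θ x ^ s * ((∑ c, Mtensor g ginv Λ p s x c b (as j) * K x (Function.update as j c))
          - ∑ e, Γ x e b (as j) * K x (Function.update as j e))
      = -((s : ℝ) / p) * Θ x ^ s * Υ x b * K x as := by
    intro j
    have hcomb : ∀ (A B C D : Fin 4 → ℝ),
        ((∑ c, A c) - ∑ c, B c) - Θ x ^ s * ((∑ c, C c) - ∑ c, D c)
          = ∑ c, (A c - B c - Θ x ^ s * (C c - D c)) := by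
      intro A B C D
      simp [Finset.sum_sub_distrib, Finset.mul_sum, mul_sub]
    rw [hcomb]
    have hterm : ∀ c : Fin 4,
        Mtensor gt gtinv Λt p s x c b (as j) * Kt x (Function.update as j c)
          - Γt x c b (as j) * Kt x (Function.update as j c)
          - Θ x ^ s * (Mtensor g ginv Λ p s x c b (as j) * K x (Function.update as j c)
            - Γ x c b (as j) * K x (Function.update as j c))
        = -((s : ℝ) / p) * Θ x ^ s * Υ x b
            * (kd (as j) c * K x (Function.update as j c)) := by
      intro c
      simp only [Mtensor, hK]
      rw [hgg (Λt x) (as j) b c]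
      simp only [hΓt, hΛt]
      have hsub : (∑ d, ginv x c d * (Λ x d - Υ x d))
          = (∑ d, ginv x c d * Λ x d) - ∑ d, ginv x c d * Υ x d := by
        rw [← Finset.sum_sub_distrib]
        exact Finset.sum_congr rfl fun d _ => by ring
      rw [hsub]
      field_simp
      ring
    simp only [hterm]
    rw [← Finset.mul_sum, hkds (fun c => K x (Function.update as j c)) (as j)]
    rw [Function.update_eq_self]
  -- assemble
  simp only [Dop, covdP]
  have hpdK : pd (fun y => Kt y as) x b
      = Θ x ^ s * pd (fun y => K y as) x b + (s : ℝ) * Θ x ^ s * Υ x b * K x as := by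
    have he : (fun y => Kt y as) = fun y => Θ y ^ s * K y as := funext fun y => hK y as
    rw [he, hmul (fun y => Θ y ^ s) (fun y => K y as) x b, hpow, hpdΘ]
    have hz : Θ x ^ (s - 1) * Θ x = Θ x ^ s := by
      rw [← zpow_add_one₀ (hΘ0 x) (s - 1)]; ring_nf
    calc Θ x ^ s * pd (fun y => K y as) x b
          + K x as * ((s : ℝ) * Θ x ^ (s - 1) * (Θ x * Υ x b))
        = Θ x ^ s * pd (fun y => K y as) x b
          + K x as * ((s : ℝ) * (Θ x ^ (s - 1) * Θ x) * Υ x b) := by ring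
      _ = _ := by rw [hz]; ring
  rw [hpdK]
  have hsum : (∑ j : Fin p, ∑ c, Mtensor gt gtinv Λt p s x c b (as j)
          * Kt x (Function.update as j c))
      - (∑ j : Fin p, ∑ e, Γt x e b (as j) * Kt x (Function.update as j e))
      - Θ x ^ s * ((∑ j : Fin p, ∑ c, Mtensor g ginv Λ p s x c b (as j)
          * K x (Function.update as j c))
        - ∑ j : Fin p, ∑ e, Γ x e b (as j) * K x (Function.update as j e))
      = -(s : ℝ) * Θ x ^ s * Υ x b * K x as := by
    have : (∑ j : Fin p, (((∑ c, Mtensor gt gtinv Λt p s x c b (as j)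
            * Kt x (Function.update as j c))
          - ∑ e, Γt x e b (as j) * Kt x (Function.update as j e))
          - Θ x ^ s * ((∑ c, Mtensor g ginv Λ p s x c b (as j)
            * K x (Function.update as j c))
            - ∑ e, Γ x e b (as j) * K x (Function.update as j e))))
        = -(s : ℝ) * Θ x ^ s * Υ x b * K x as := by
      rw [Finset.sum_congr rfl fun j _ => hper j]
      rw [Finset.sum_const, Finset.card_univ, Fintype.card_fin, nsmul_eq_mul]
      field_simp
    calc _ = ∑ j : Fin p, (((∑ c, Mtensor gt gtinv Λt p s x c b (as j)
            * Kt x (Function.update as j c))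
          - ∑ e, Γt x e b (as j) * Kt x (Function.update as j e))
          - Θ x ^ s * ((∑ c, Mtensor g ginv Λ p s x c b (as j)
            * K x (Function.update as j c))
            - ∑ e, Γ x e b (as j) * K x (Function.update as j e))) := by
          simp [Finset.sum_sub_distrib, Finset.mul_sum, mul_sub]
      _ = _ := this
  linear_combination hsum

end
end
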